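/- Let M = (m₁,…,mₙ) ∈ ℕⁿ with each mⱼ ≥ 1. There exist constants ĉ > 0 and ε̂ > 0 sufficiently small such that for all 0 < ε ≤ ε̂ there exists 0 < ε′ < ε such that for every M-conic set X ⊂ ℝⁿ∖{0} one has X_{[ε′⟨·⟩_M]} ⊂ ∪_{η∈X∩𝕊_M} Γ_M(η;ε) ∩ {ξ : ⟨ξ⟩_M > ĉ/ε}, and conversely ∪_{η∈X∩𝕊_M} Γ_M(η;ε′) ∩ {ξ : ⟨ξ⟩_M > ĉ/ε′} ⊂ X_{[ε⟨·⟩_M]}. -/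

import Mathlib

open MeasureTheory

variable {n : ℕ}

/-- The quasi-homogeneous weight `⟨ξ⟩_M = (1 + Σ_j ξ_j^(2 m_j))^(1/2)`. -/
noncomputable def qw (M : Fin n → ℕ) (ξ : EuclideanSpace ℝ (Fin n)) : ℝ :=
  Real.sqrt (1 + ∑ j, ξ j ^ (2 * M j))

/-- The quasi-homogeneous norm `|ξ|_M = (Σ_j ξ_j^(2 m_j))^(1/2)`. -/
noncomputable def qnorm (M : Fin n → ℕ) (ξ : EuclideanSpace ℝ (Fin n)) : ℝ :=
  Real.sqrt (∑ j, ξ j ^ (2 * M j))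

/-- The anisotropic dilation `t^{1/M} ξ = (t^{1/m₁} ξ₁, …, t^{1/mₙ} ξₙ)`. -/
noncomputable def qdil (M : Fin n → ℕ) (t : ℝ) (ξ : EuclideanSpace ℝ (Fin n)) :
    EuclideanSpace ℝ (Fin n) :=
  (EuclideanSpace.equiv (Fin n) ℝ).symm fun j => t ^ ((M j : ℝ))⁻¹ * ξ j

/-- A set `Γ ⊆ ℝⁿ ∖ {0}` is `M`-conic if it is stable under all dilations `t^{1/M}`. -/
def IsMConic (M : Fin n → ℕ) (X : Set (EuclideanSpace ℝ (Fin n))) : Prop :=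
  ∀ ξ ∈ X, ∀ t : ℝ, 0 < t → qdil M t ξ ∈ X

/-- The unit `M`-sphere `𝕊_M = {x : |x|_M = 1}`. -/
def mSphere (M : Fin n → ℕ) : Set (EuclideanSpace ℝ (Fin n)) :=
  {x | qnorm M x = 1}

/-- The `M`-ball `B_M(x₀; R) = {x : |x - x₀|_M < R}`. -/
def mBall (M : Fin n → ℕ) (x₀ : EuclideanSpace ℝ (Fin n)) (R : ℝ) :
    Set (EuclideanSpace ℝ (Fin n)) :=
  {x | qnorm M (x - x₀) < R}

/-- The `M`-cone generated by `B_M(η; R)`: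
`Γ_M(η; R) = {t^{1/M} ξ : ξ ∈ B_M(η; R), t > 0} ∩ (ℝⁿ ∖ {0})`. -/
def mCone (M : Fin n → ℕ) (η : EuclideanSpace ℝ (Fin n)) (R : ℝ) :
    Set (EuclideanSpace ℝ (Fin n)) :=
  {ζ | ζ ≠ 0 ∧ ∃ t : ℝ, 0 < t ∧ ∃ ξ ∈ mBall M η R, ζ = qdil M t ξ}

/-- The `[⟨·⟩_M]`-neighborhood of size `ε` of `X`:
`X_{[ε⟨·⟩_M]} = ⋃_{ξ₀ ∈ X} {ξ : ⟨ξ - ξ₀⟩_M < ε ⟨ξ₀⟩_M}`. -/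
def brNbhdM (M : Fin n → ℕ) (ε : ℝ) (X : Set (EuclideanSpace ℝ (Fin n))) :
    Set (EuclideanSpace ℝ (Fin n)) :=
  ⋃ ξ₀ ∈ X, {ξ | qw M (ξ - ξ₀) < ε * qw M ξ₀}

section Helpers

variable (M : Fin n → ℕ)

lemma qS_nonneg (ξ : EuclideanSpace ℝ (Fin n)) : 0 ≤ ∑ j, ξ j ^ (2 * M j) :=
  Finset.sum_nonneg fun j _ => (even_two_mul (M j)).pow_nonneg _

lemma qw_sq (ξ : EuclideanSpace ℝ (Fin n)) :
    qw M ξ ^ 2 = 1 + ∑ j, ξ j ^ (2 * M j) :=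
  Real.sq_sqrt (by linarith [qS_nonneg M ξ])

lemma one_le_qw (ξ : EuclideanSpace ℝ (Fin n)) : 1 ≤ qw M ξ := by
  have h := qS_nonneg M ξ
  have h1 : (1:ℝ) ≤ 1 + ∑ j, ξ j ^ (2 * M j) := by linarith
  calc (1:ℝ) = Real.sqrt 1 := (Real.sqrt_one).symm
  _ ≤ qw M ξ := Real.sqrt_le_sqrt h1

lemma qw_pos (ξ : EuclideanSpace ℝ (Fin n)) : 0 < qw M ξ :=
  lt_of_lt_of_le one_pos (one_le_qw M ξ)

lemma qnorm_nonneg (ξ : EuclideanSpace ℝ (Fin n)) : 0 ≤ qnorm M ξ :=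
  Real.sqrt_nonneg _

lemma qnorm_sq (ξ : EuclideanSpace ℝ (Fin n)) :
    qnorm M ξ ^ 2 = ∑ j, ξ j ^ (2 * M j) :=
  Real.sq_sqrt (qS_nonneg M ξ)

lemma qnorm_le_qw (ξ : EuclideanSpace ℝ (Fin n)) : qnorm M ξ ≤ qw M ξ :=
  Real.sqrt_le_sqrt (by linarith)

lemma qw_neg (ξ : EuclideanSpace ℝ (Fin n)) : qw M (-ξ) = qw M ξ := by
  unfold qw
  congr 2
  refine Finset.sum_congr rfl fun j _ => ?_
  have h : (-ξ) j = -(ξ j) := rfl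
  rw [h, (even_two_mul (M j)).neg_pow]

lemma qw_sub_comm (a b : EuclideanSpace ℝ (Fin n)) : qw M (a - b) = qw M (b - a) := by
  rw [← qw_neg M (a - b), neg_sub]

lemma qdil_pow (hM : ∀ j, 1 ≤ M j) {t : ℝ} (ht : 0 < t) (ξ : EuclideanSpace ℝ (Fin n))
    (j : Fin n) : (qdil M t ξ) j ^ (2 * M j) = t ^ 2 * ξ j ^ (2 * M j) := by
  have hj : (M j : ℝ) ≠ 0 := by
    have := hM j; positivity
  have h1 : (qdil M t ξ) j = t ^ ((M j : ℝ))⁻¹ * ξ j := rfl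
  rw [h1, mul_pow]
  congr 1
  rw [← Real.rpow_natCast (t ^ ((M j : ℝ))⁻¹) (2 * M j), ← Real.rpow_mul ht.le]
  have h2 : ((M j : ℝ))⁻¹ * ((2 * M j : ℕ) : ℝ) = 2 := by
    push_cast
    field_simp
  rw [h2, show (2:ℝ) = ((2:ℕ):ℝ) by norm_num, Real.rpow_natCast]

lemma qnorm_qdil (hM : ∀ j, 1 ≤ M j) {t : ℝ} (ht : 0 < t) (ξ : EuclideanSpace ℝ (Fin n)) :
    qnorm M (qdil M t ξ) = t * qnorm M ξ := by
  unfold qnorm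
  rw [Finset.sum_congr rfl fun j _ => qdil_pow M hM ht ξ j, ← Finset.mul_sum,
    Real.sqrt_mul (sq_nonneg t), Real.sqrt_sq ht.le]

lemma qdil_sub (t : ℝ) (a b : EuclideanSpace ℝ (Fin n)) :
    qdil M t (a - b) = qdil M t a - qdil M t b := by
  ext j
  show t ^ ((M j : ℝ))⁻¹ * (a j - b j) = t ^ ((M j : ℝ))⁻¹ * a j - t ^ ((M j : ℝ))⁻¹ * b j
  ring

lemma qdil_qdil {s t : ℝ} (hs : 0 < s) (ht : 0 < t) (ξ : EuclideanSpace ℝ (Fin n)) :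
    qdil M s (qdil M t ξ) = qdil M (s * t) ξ := by
  ext j
  show s ^ ((M j : ℝ))⁻¹ * (t ^ ((M j : ℝ))⁻¹ * ξ j) = (s * t) ^ ((M j : ℝ))⁻¹ * ξ j
  rw [Real.mul_rpow hs.le ht.le]
  ring

lemma qdil_one (ξ : EuclideanSpace ℝ (Fin n)) : qdil M 1 ξ = ξ := by
  ext j
  show (1:ℝ) ^ ((M j : ℝ))⁻¹ * ξ j = ξ j
  rw [Real.one_rpow, one_mul]

lemma qdil_inv {t : ℝ} (ht : 0 < t) (ξ : EuclideanSpace ℝ (Fin n)) :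
    qdil M t (qdil M t⁻¹ ξ) = ξ := by
  rw [qdil_qdil M ht (inv_pos.2 ht), mul_inv_cancel₀ ht.ne', qdil_one]

lemma qnorm_pos (hM : ∀ j, 1 ≤ M j) {ξ : EuclideanSpace ℝ (Fin n)} (hξ : ξ ≠ 0) :
    0 < qnorm M ξ := by
  rcases lt_or_eq_of_le (qnorm_nonneg M ξ) with h | h
  · exact h
  exfalso
  apply hξ
  have hsum : ∑ j, ξ j ^ (2 * M j) = 0 := by
    have h2 := qnorm_sq M ξ
    rw [← h] at h2
    simpa using h2.symm
  have hz := (Finset.sum_eq_zero_iff_of_nonneg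
    (fun j _ => (even_two_mul (M j)).pow_nonneg (ξ j))).1 hsum
  ext j
  have hj := hz j (Finset.mem_univ j)
  have h2 : 2 * M j ≠ 0 := by have := hM j; omega
  exact pow_eq_zero_iff h2 |>.1 hj

end Helpers

/-- The constant in the quasi-triangle inequality. -/
noncomputable def qC (M : Fin n → ℕ) : ℝ := 2 ^ (2 * Finset.univ.sup M + 1)

/-- `K = √C`. -/
noncomputable def qK (M : Fin n → ℕ) : ℝ := Real.sqrt (qC M)

lemma two_le_qC (M : Fin n → ℕ) : 2 ≤ qC M := by
  unfold qC
  calc (2:ℝ) = 2 ^ 1 := (pow_one 2).symm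
  _ ≤ _ := pow_le_pow_right₀ one_le_two (by omega)

lemma one_le_qK (M : Fin n → ℕ) : 1 ≤ qK M := by
  unfold qK
  rw [show (1:ℝ) = Real.sqrt 1 by rw [Real.sqrt_one]]
  exact Real.sqrt_le_sqrt (by linarith [two_le_qC M])

lemma qK_sq (M : Fin n → ℕ) : qK M ^ 2 = qC M :=
  Real.sq_sqrt (by linarith [two_le_qC M])

lemma coord_quasi (M : Fin n → ℕ) (x y : ℝ) (j : Fin n) :
    (x + y) ^ (2 * M j) ≤ qC M * (x ^ (2 * M j) + y ^ (2 * M j)) := by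
  have h1 : (x + y) ^ (2 * M j) ≤ 2 ^ (2 * M j - 1) * (x ^ (2 * M j) + y ^ (2 * M j)) :=
    (even_two_mul (M j)).add_pow_le
  refine h1.trans (mul_le_mul_of_nonneg_right ?_ ?_)
  · unfold qC
    apply pow_le_pow_right₀ one_le_two
    have := Finset.le_sup (f := M) (Finset.mem_univ j)
    omega
  · have hx := (even_two_mul (M j)).pow_nonneg x
    have hy := (even_two_mul (M j)).pow_nonneg y
    linarith

lemma sum_quasi (M : Fin n → ℕ) (a b : EuclideanSpace ℝ (Fin n)) :
    ∑ j, (a + b) j ^ (2 * M j) ≤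
      qC M * (∑ j, a j ^ (2 * M j)) + qC M * (∑ j, b j ^ (2 * M j)) := by
  calc ∑ j, (a + b) j ^ (2 * M j)
      = ∑ j, (a j + b j) ^ (2 * M j) := rfl
    _ ≤ ∑ j, qC M * (a j ^ (2 * M j) + b j ^ (2 * M j)) :=
        Finset.sum_le_sum fun j _ => coord_quasi M (a j) (b j) j
    _ = qC M * (∑ j, a j ^ (2 * M j)) + qC M * (∑ j, b j ^ (2 * M j)) := by
        simp only [mul_add, Finset.sum_add_distrib, Finset.mul_sum]

lemma qw_add_le (M : Fin n → ℕ) (a b : EuclideanSpace ℝ (Fin n)) :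
    qw M (a + b) ≤ qK M * (qw M a + qw M b) := by
  have hC := two_le_qC M
  have hsum := sum_quasi M a b
  have h1 : qw M (a + b) ^ 2 ≤ (qK M * (qw M a + qw M b)) ^ 2 := by
    rw [qw_sq, mul_pow, qK_sq]
    have ha := qw_sq M a
    have hb := qw_sq M b
    nlinarith [qw_pos M a, qw_pos M b, mul_pos (qw_pos M a) (qw_pos M b)]
  have h2 : 0 ≤ qK M * (qw M a + qw M b) := by
    have := one_le_qK M
    have := qw_pos M a; have := qw_pos M b
    positivity
  nlinarith [qw_pos M (a + b)]

lemma qnorm_add_le (M : Fin n → ℕ) (a b : EuclideanSpace ℝ (Fin n)) :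
    qnorm M (a + b) ≤ qK M * (qnorm M a + qnorm M b) := by
  have hC := two_le_qC M
  have hsum := sum_quasi M a b
  have h1 : qnorm M (a + b) ^ 2 ≤ (qK M * (qnorm M a + qnorm M b)) ^ 2 := by
    rw [qnorm_sq, mul_pow, qK_sq]
    have ha := qnorm_sq M a
    have hb := qnorm_sq M b
    nlinarith [qnorm_nonneg M a, qnorm_nonneg M b,
      mul_nonneg (qnorm_nonneg M a) (qnorm_nonneg M b)]
  have h2 : 0 ≤ qK M * (qnorm M a + qnorm M b) := by
    have := one_le_qK M
    have := qnorm_nonneg M a; have := qnorm_nonneg M b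
    positivity
  nlinarith [qnorm_nonneg M (a + b)]

/-! ### Pure arithmetic lemmas (kept out of the heavy geometric context). -/

lemma arith_eps'le {K ε ε' : ℝ} (hK1 : 1 ≤ K) (hε1 : ε ≤ 1) (hε'pos : 0 < ε')
    (hmul : ε' * (7 * K ^ 2) = ε) : ε' ≤ 1 / 7 := by
  have hK2 : 1 ≤ K ^ 2 := by nlinarith
  nlinarith [mul_nonneg hε'pos.le (sub_nonneg.2 hK2)]

lemma arith_2eps {K ε ε' : ℝ} (hK1 : 1 ≤ K) (hε'pos : 0 < ε')
    (hmul : ε' * (7 * K ^ 2) = ε) : 2 * ε' < ε := by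
  have hK2 : 1 ≤ K ^ 2 := by nlinarith
  nlinarith [mul_nonneg hε'pos.le (sub_nonneg.2 hK2)]

lemma arith_w7 {ε' w : ℝ} (h : 1 < ε' * w) (hle : ε' ≤ 1 / 7) (hw : 0 < w) : 7 < w := by
  nlinarith

lemma arith_r1 {w r : ℝ} (hsq : w ^ 2 = 1 + r ^ 2) (h7 : 7 < w) (hr : 0 ≤ r) : 1 ≤ r := by
  nlinarith

lemma arith_w2r {w r : ℝ} (hsq : w ^ 2 = 1 + r ^ 2) (h7 : 7 < w) (hr1 : 1 ≤ r) :
    w ≤ 2 * r := by nlinarith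

lemma arith_absurd {ε' w : ℝ} (h : w < ε' * w) (hle : ε' ≤ 1 / 7) (hw : 0 < w) : False := by
  nlinarith

set_option maxHeartbeats 1000000 in
lemma arith_final1 {K ε ε' w d u : ℝ} (hK1 : 1 ≤ K) (hε : 0 < ε) (hε1 : ε ≤ 1)
    (hmul : ε' * (7 * K ^ 2) = ε) (hε'pos : 0 < ε') (hlt : d < ε' * w)
    (hA : w ≤ K * (d + u)) (hgt1 : 1 < ε' * w) (hw : 0 < w) : 3 * K < u * ε := by
  have hKpos : 0 < K := by linarith
  have h7K : (0:ℝ) < 7 * K ^ 2 := by positivity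
  have hmulw : ε' * (7 * K ^ 2) * w = ε * w := by rw [hmul]
  have hεqw : 7 * K ^ 2 < ε * w := by
    nlinarith [mul_lt_mul_of_pos_left hgt1 h7K, hmulw]
  have hKε' : K * ε' ≤ 1 / 7 := by nlinarith
  have hB : w * (1 - K * ε') < K * u := by
    nlinarith [mul_lt_mul_of_pos_left hlt hKpos]
  have h67 : (6 / 7) * w < K * u := by
    nlinarith [mul_nonneg hw.le (sub_nonneg.2 hKε')]
  nlinarith [mul_lt_mul_of_pos_left h67 hε, mul_pos hKpos hKpos]

set_option maxHeartbeats 1000000 in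
lemma arith_final2 {K ε ε' t d q u : ℝ} (hK1 : 1 ≤ K) (hε : 0 < ε) (hε1 : ε ≤ 1)
    (hmul : ε' * (7 * K ^ 2) = ε) (hε'pos : 0 < ε') (ht : 0 < t)
    (hd0 : 0 ≤ d) (hd : d < ε') (hq0 : 0 ≤ q) (hq : q ≤ K * (1 + d))
    (hu2 : u ^ 2 = 1 + (t * q) ^ 2) (hbig : 3 * K < u * ε') (hu : 0 < u) :
    1 + (t * d) ^ 2 < ε ^ 2 * (1 + t ^ 2) := by
  have hKpos : 0 < K := by linarith
  have hε'le : ε' ≤ 1 / 7 := arith_eps'le hK1 hε1 hε'pos hmul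
  have hqle : q ≤ 2 * K := by
    nlinarith [mul_le_mul_of_nonneg_left (le_trans hd.le hε'le) hKpos.le]
  have h9 : 9 * K ^ 2 < u ^ 2 * ε' ^ 2 := by
    nlinarith [mul_self_lt_mul_self (by positivity : (0:ℝ) ≤ 3 * K) hbig]
  have h4 : u ^ 2 ≤ 1 + 4 * K ^ 2 * t ^ 2 := by
    nlinarith [mul_self_le_mul_self hq0 hqle, sq_nonneg t,
      mul_le_mul_of_nonneg_left (mul_self_le_mul_self hq0 hqle) (sq_nonneg t)]
  have ht2 : 1 < t ^ 2 * ε' ^ 2 := by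
    nlinarith [mul_le_mul_of_nonneg_right h4 (sq_nonneg ε'),
      mul_self_le_mul_self hε'pos.le hε'le, sq_nonneg ε', mul_pos hKpos hKpos]
  have hK2 : 1 ≤ K ^ 2 := by nlinarith
  have hεge : 7 * ε' ≤ ε := by
    nlinarith [mul_nonneg hε'pos.le (sub_nonneg.2 hK2)]
  have hε'ε : 2 * ε' ^ 2 < ε ^ 2 := by
    nlinarith [mul_self_le_mul_self (by positivity : (0:ℝ) ≤ 7 * ε') hεge]
  have hd2 : d ^ 2 < ε' ^ 2 := by
    nlinarith [mul_self_lt_mul_self hd0 hd]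
  nlinarith [mul_le_mul_of_nonneg_left hd2.le (sq_nonneg t), sq_nonneg ε, sq_nonneg t,
    mul_le_mul_of_nonneg_right hε'ε.le (sq_nonneg t),
    mul_lt_mul_of_pos_right hε'ε (by positivity : (0:ℝ) < t ^ 2)]

/-- Equivalence between `[⟨·⟩_M]`-neighborhoods of an `M`-conic set `X` and unions of
truncated `M`-cones outgoing from points of `X ∩ 𝕊_M`. -/
theorem brNbhdM_eq_union_mCones (M : Fin n → ℕ) (hM : ∀ j, 1 ≤ M j) :
    ∃ chat εhat : ℝ, 0 < chat ∧ 0 < εhat ∧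
      ∀ ε : ℝ, 0 < ε → ε ≤ εhat → ∃ ε' : ℝ, 0 < ε' ∧ ε' < ε ∧
        ∀ X : Set (EuclideanSpace ℝ (Fin n)), (0 : EuclideanSpace ℝ (Fin n)) ∉ X →
          IsMConic M X →
          brNbhdM M ε' X ⊆
            (⋃ η ∈ X ∩ mSphere M, mCone M η ε) ∩ {ξ | chat / ε < qw M ξ} ∧
          (⋃ η ∈ X ∩ mSphere M, mCone M η ε') ∩ {ξ | chat / ε' < qw M ξ} ⊆
            brNbhdM M ε X := by
  classical
  have hK1 : 1 ≤ qK M := one_le_qK M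
  set K := qK M with hKdef
  have hKpos : 0 < K := lt_of_lt_of_le one_pos hK1
  have hK2 : 1 ≤ K ^ 2 := by nlinarith
  refine ⟨3 * K, 1, by positivity, one_pos, ?_⟩
  intro ε hε hε1
  refine ⟨ε / (7 * K ^ 2), by positivity, ?_, ?_⟩
  · have h7 : (1:ℝ) < 7 * K ^ 2 := by nlinarith
    have h := div_lt_div_of_pos_left hε one_pos h7
    simpa using h
  intro X hX0 hXc
  set ε' := ε / (7 * K ^ 2) with hε'def
  have hε'pos : 0 < ε' := by positivity
  have hε'mul : ε' * (7 * K ^ 2) = ε := by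
    rw [hε'def]; field_simp
  have hε'le : ε' ≤ 1 / 7 := arith_eps'le hK1 hε1 hε'pos hε'mul
  constructor
  · -- first inclusion
    intro ξ hξ
    simp only [brNbhdM, Set.mem_iUnion, Set.mem_setOf_eq] at hξ
    obtain ⟨ξ₀, hξ₀X, hlt⟩ := hξ
    have h1 := one_le_qw M (ξ - ξ₀)
    have hwpos := qw_pos M ξ₀
    have hgt1 : 1 < ε' * qw M ξ₀ := lt_of_le_of_lt h1 hlt
    have hξ₀ne : ξ₀ ≠ 0 := fun h => hX0 (h ▸ hξ₀X)
    have hrpos : 0 < qnorm M ξ₀ := qnorm_pos M hM hξ₀ne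
    set r := qnorm M ξ₀ with hrdef
    have hw7 : 7 < qw M ξ₀ := arith_w7 hgt1 hε'le hwpos
    have hwsq : qw M ξ₀ ^ 2 = 1 + r ^ 2 := by
      rw [qw_sq, hrdef, qnorm_sq]
    have hr1 : 1 ≤ r := arith_r1 hwsq hw7 hrpos.le
    have hwle : qw M ξ₀ ≤ 2 * r := arith_w2r hwsq hw7 hr1
    have hrinv : 0 < r⁻¹ := inv_pos.2 hrpos
    have hηX : qdil M r⁻¹ ξ₀ ∈ X := hXc ξ₀ hξ₀X r⁻¹ hrinv
    have hηS : qdil M r⁻¹ ξ₀ ∈ mSphere M := by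
      show qnorm M (qdil M r⁻¹ ξ₀) = 1
      rw [qnorm_qdil M hM hrinv, ← hrdef, inv_mul_cancel₀ hrpos.ne']
    have hξne : ξ ≠ 0 := by
      intro h0
      rw [h0, zero_sub, qw_neg] at hlt
      exact arith_absurd hlt hε'le hwpos
    refine ⟨?_, ?_⟩
    · simp only [Set.mem_iUnion]
      refine ⟨qdil M r⁻¹ ξ₀, ⟨hηX, hηS⟩, ?_⟩
      refine ⟨hξne, r, hrpos, qdil M r⁻¹ ξ, ?_, (qdil_inv M hrpos ξ).symm⟩
      show qnorm M (qdil M r⁻¹ ξ - qdil M r⁻¹ ξ₀) < ε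
      rw [← qdil_sub, qnorm_qdil M hM hrinv]
      have hle : qnorm M (ξ - ξ₀) ≤ qw M (ξ - ξ₀) := qnorm_le_qw M _
      have hlt2 : qnorm M (ξ - ξ₀) < ε' * (2 * r) := by
        calc qnorm M (ξ - ξ₀) ≤ qw M (ξ - ξ₀) := hle
        _ < ε' * qw M ξ₀ := hlt
        _ ≤ ε' * (2 * r) := mul_le_mul_of_nonneg_left hwle hε'pos.le
      have h2e : 2 * ε' < ε := arith_2eps hK1 hε'pos hε'mul
      calc r⁻¹ * qnorm M (ξ - ξ₀) < r⁻¹ * (ε' * (2 * r)) :=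
            mul_lt_mul_of_pos_left hlt2 hrinv
      _ = 2 * ε' := by field_simp
      _ < ε := h2e
    · show 3 * K / ε < qw M ξ
      have hA : qw M ξ₀ ≤ K * (qw M (ξ - ξ₀) + qw M ξ) := by
        have h := qw_add_le M (ξ₀ - ξ) ξ
        rw [sub_add_cancel, qw_sub_comm M ξ₀ ξ] at h
        exact h
      rw [div_lt_iff₀ hε]
      exact arith_final1 hK1 hε hε1 hε'mul hε'pos hlt hA hgt1 hwpos
  · -- second inclusion
    rintro ξ ⟨hcone, hbig⟩
    simp only [Set.mem_iUnion] at hcone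
    obtain ⟨η, ⟨hηX, hηS⟩, hξne, t, ht, ζ, hζ, hξeq⟩ := hcone
    have hζball : qnorm M (ζ - η) < ε' := hζ
    have hbig' : 3 * K / ε' < qw M ξ := hbig
    have hξ₀X : qdil M t η ∈ X := hXc η hηX t ht
    set ξ₀ := qdil M t η with hξ₀def
    have hη1 : qnorm M η = 1 := hηS
    have hsub : ξ - ξ₀ = qdil M t (ζ - η) := by
      rw [qdil_sub, hξeq]
    have hqn : qnorm M (ξ - ξ₀) = t * qnorm M (ζ - η) := by
      rw [hsub, qnorm_qdil M hM ht]
    have e1 : qw M (ξ - ξ₀) ^ 2 = 1 + qnorm M (ξ - ξ₀) ^ 2 := by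
      rw [qw_sq, qnorm_sq]
    have hqnξ₀ : qnorm M ξ₀ = t := by
      rw [hξ₀def, qnorm_qdil M hM ht, hη1, mul_one]
    have e2 : qw M ξ₀ ^ 2 = 1 + t ^ 2 := by
      rw [qw_sq, ← qnorm_sq, hqnξ₀]
    have hζle : qnorm M ζ ≤ K * (1 + qnorm M (ζ - η)) := by
      have h := qnorm_add_le M η (ζ - η)
      have heq : η + (ζ - η) = ζ := by abel
      rw [heq, hη1] at h
      exact h
    have hqnξ : qnorm M ξ = t * qnorm M ζ := by
      rw [hξeq, qnorm_qdil M hM ht]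
    have e3 : qw M ξ ^ 2 = 1 + qnorm M ξ ^ 2 := by
      rw [qw_sq, qnorm_sq]
    have hbig2 : 3 * K < qw M ξ * ε' := (div_lt_iff₀ hε'pos).1 hbig'
    have hkey : 1 + (t * qnorm M (ζ - η)) ^ 2 < ε ^ 2 * (1 + t ^ 2) := by
      refine arith_final2 hK1 hε hε1 hε'mul hε'pos ht (qnorm_nonneg M (ζ - η)) hζball
        (qnorm_nonneg M ζ) hζle ?_ hbig2 (qw_pos M ξ)
      rw [e3, hqnξ]
    have hsq : qw M (ξ - ξ₀) ^ 2 < (ε * qw M ξ₀) ^ 2 := by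
      have hexp : (ε * qw M ξ₀) ^ 2 = ε ^ 2 * qw M ξ₀ ^ 2 := by ring
      rw [hexp, e2, e1, hqn]
      exact hkey
    simp only [brNbhdM, Set.mem_iUnion, Set.mem_setOf_eq]
    refine ⟨ξ₀, hξ₀X, ?_⟩
    have hpos : (0:ℝ) ≤ ε * qw M ξ₀ := mul_nonneg hε.le (qw_pos M ξ₀).le
    exact lt_of_pow_lt_pow_left₀ 2 hpos hsq
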